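/- For every natural number n ≥ 1, the Stern polynomials B_n(t) and B_{n+1}(t) are coprime in ℤ[t], i.e. gcd(B_n(t), B_{n+1}(t)) = 1. -/

import Mathlib

open Polynomial

/-- The Stern polynomials: `B 0 = 0`, `B 1 = 1`, `B (2n) = t * B n`,
`B (2n+1) = B n + B (n+1)`. -/
noncomputable def stern : ℕ → Polynomial ℤ
  | 0 => 0
  | 1 => 1
  | n + 2 =>
    if _h : n % 2 = 0 then
      X * stern (n / 2 + 1)
    else
      stern (n / 2 + 1) + stern (n / 2 + 2)
  decreasing_by all_goals omega

lemma stern_two_mul (m : ℕ) : stern (2 * m) = X * stern m := by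
  match m with
  | 0 => simp [stern]
  | m + 1 =>
    show stern (2 * m + 2) = _
    rw [stern]
    have h : (2 * m) % 2 = 0 := by omega
    rw [dif_pos h]
    congr 2
    omega

lemma stern_two_mul_add_one (m : ℕ) : stern (2 * m + 1) = stern m + stern (m + 1) := by
  match m with
  | 0 => simp [stern]
  | m + 1 =>
    show stern ((2 * m + 1) + 2) = _
    rw [stern]
    have h : ¬ (2 * m + 1) % 2 = 0 := by omega
    rw [dif_neg h]
    have h2 : (2 * m + 1) / 2 = m := by omega
    rw [h2]

lemma stern_odd_eval (m : ℕ) : (stern (2 * m + 1)).eval 0 = 1 := by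
  induction m using Nat.strong_induction_on with
  | _ m ih =>
    match m with
    | 0 => simp [stern]
    | m + 1 =>
      rw [stern_two_mul_add_one]
      rcases Nat.even_or_odd (m + 1) with ⟨k, hk⟩ | ⟨k, hk⟩
      · have hk' : m + 1 = 2 * k := by omega
        rw [hk', stern_two_mul]
        simp [ih k (by omega)]
      · rw [hk]
        have h2 : 2 * k + 1 + 1 = 2 * (k + 1) := by omega
        rw [h2, stern_two_mul]
        simp [ih k (by omega)]

lemma isCoprime_X_of_dvd (d p : Polynomial ℤ) (hdp : d ∣ p) (hp : p.eval 0 = 1) :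
    IsCoprime d X := by
  have hdvd : d.eval 0 ∣ (1 : ℤ) := by
    rw [← hp]
    simpa using map_dvd (Polynomial.evalRingHom (0 : ℤ)) hdp
  set ε : ℤ := d.eval 0 with hε
  have hsq : ε * ε = 1 := by
    rcases Int.isUnit_iff.mp (isUnit_of_dvd_one hdvd) with h | h <;> rw [h] <;> ring
  have hX : X ∣ d - C ε := by
    rw [Polynomial.X_dvd_iff]
    simp [Polynomial.coeff_zero_eq_eval_zero, hε]
  obtain ⟨q, hq⟩ := hX
  refine ⟨C ε, -q * C ε, ?_⟩
  have hd : d = C ε + X * q := by linear_combination hq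
  have hsq' : (C ε : Polynomial ℤ) * C ε = 1 := by
    rw [← Polynomial.C_mul, hsq, map_one]
  linear_combination C ε * hd + hsq'

theorem stern_consecutive_coprime (n : ℕ) (hn : 1 ≤ n) (d : Polynomial ℤ)
    (hd1 : d ∣ stern n) (hd2 : d ∣ stern (n + 1)) : IsUnit d := by
  induction n using Nat.strong_induction_on generalizing d with
  | _ n ih =>
    match n, hn with
    | 1, _ =>
      have h1 : stern 1 = 1 := by rw [stern]
      rw [h1] at hd1
      exact isUnit_of_dvd_one hd1
    | n + 2, _ =>
      rcases Nat.even_or_odd (n + 2) with ⟨k, hk⟩ | ⟨k, hk⟩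
      · -- n + 2 = 2k, k ≥ 1
        have hk' : n + 2 = 2 * k := by omega
        have hk1 : 1 ≤ k := by omega
        rw [hk', stern_two_mul] at hd1
        have h3 : n + 2 + 1 = 2 * k + 1 := by omega
        rw [h3, stern_two_mul_add_one] at hd2
        have hcop : IsCoprime d X := by
          refine isCoprime_X_of_dvd d (stern (2 * k + 1)) ?_ (stern_odd_eval k)
          rw [stern_two_mul_add_one]; exact hd2
        have hdm : d ∣ stern k := hcop.dvd_of_dvd_mul_left hd1
        exact ih k (by omega) hk1 d hdm ((dvd_add_right hdm).mp hd2)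
      · -- n + 2 = 2k+1, k ≥ 1
        have hk' : n + 2 = 2 * k + 1 := by omega
        have hk1 : 1 ≤ k := by omega
        rw [hk', stern_two_mul_add_one] at hd1
        have h3 : n + 2 + 1 = 2 * (k + 1) := by omega
        rw [h3, stern_two_mul] at hd2
        have hcop : IsCoprime d X := by
          refine isCoprime_X_of_dvd d (stern (2 * k + 1)) ?_ (stern_odd_eval k)
          rw [stern_two_mul_add_one]; exact hd1
        have hdm1 : d ∣ stern (k + 1) := hcop.dvd_of_dvd_mul_left hd2
        have hdm : d ∣ stern k := (dvd_add_right hdm1).mp (by rwa [add_comm] at hd1)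
        exact ih k (by omega) hk1 d hdm hdm1
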